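/- Let k be a field of characteristic ≠ 2 and let E, Ẽ, Ê be the free-nilpotent-of-class-2 quotients of the Lie algebras S = ⟨x₁,x₂,x₃,x₄ | [x₁,x₂], [x₃,x₂]+[x₁,x₄]⟩, S̃ = ⟨x₁,x₂,x₃,x₄ | [x₁,x₂], [x₁,x₃]⟩ and Ŝ = ⟨x₁,x₂,x₃,x₄ | [x₁,x₂], [x₄,x₃]⟩, i.e. E = S/[S,S,S], Ẽ = S̃/[S̃,S̃,S̃], Ê = Ŝ/[Ŝ,Ŝ,Ŝ]. Then E, Ẽ, Ê are pairwise non-isomorphic as Lie algebras. -/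

import Mathlib

set_option linter.unusedSectionVars false
set_option maxHeartbeats 1000000


universe u

variable (k : Type u) [Field k]

open FreeLieAlgebra

/-- The Lie algebra `⟨x₁,x₂,x₃,x₄ | r₁, r₂⟩`: the quotient of the free Lie algebra on four
generators by the ideal generated by the two relators. -/
def twoRelatorAlg (r₁ r₂ : FreeLieAlgebra k (Fin 4)) : Type u :=
  FreeLieAlgebra k (Fin 4) ⧸ LieSubmodule.lieSpan k (FreeLieAlgebra k (Fin 4))
    ({r₁, r₂} : Set (FreeLieAlgebra k (Fin 4)))

noncomputable instance (r₁ r₂ : FreeLieAlgebra k (Fin 4)) : LieRing (twoRelatorAlg k r₁ r₂) := by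
  unfold twoRelatorAlg; infer_instance

noncomputable instance (r₁ r₂ : FreeLieAlgebra k (Fin 4)) : LieAlgebra k (twoRelatorAlg k r₁ r₂) := by
  unfold twoRelatorAlg; infer_instance

/-- The free-nilpotent-of-class-2 quotient `A/[A,A,A]` of a Lie algebra `A`. -/
def classTwoQuot (A : Type u) [LieRing A] [LieAlgebra k A] : Type u :=
  A ⧸ (LieModule.lowerCentralSeries k A A 2)

noncomputable instance (A : Type u) [LieRing A] [LieAlgebra k A] : LieRing (classTwoQuot k A) := by
  unfold classTwoQuot; infer_instance

noncomputable instance (A : Type u) [LieRing A] [LieAlgebra k A] :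
    LieAlgebra k (classTwoQuot k A) := by
  unfold classTwoQuot; infer_instance

/-- `S = ⟨x₁,x₂,x₃,x₄ | [x₁,x₂], [x₃,x₂]+[x₁,x₄]⟩`. -/
noncomputable def S : Type u :=
  twoRelatorAlg k ⁅of k (0 : Fin 4), of k (1 : Fin 4)⁆ (⁅of k (2 : Fin 4), of k (1 : Fin 4)⁆ + ⁅of k (0 : Fin 4), of k (3 : Fin 4)⁆)

/-- `S̃ = ⟨x₁,x₂,x₃,x₄ | [x₁,x₂], [x₁,x₃]⟩`. -/
noncomputable def St : Type u := twoRelatorAlg k ⁅of k (0 : Fin 4), of k (1 : Fin 4)⁆ ⁅of k (0 : Fin 4), of k (2 : Fin 4)⁆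

/-- `Ŝ = ⟨x₁,x₂,x₃,x₄ | [x₁,x₂], [x₄,x₃]⟩`. -/
noncomputable def Sh : Type u := twoRelatorAlg k ⁅of k (0 : Fin 4), of k (1 : Fin 4)⁆ ⁅of k (3 : Fin 4), of k (2 : Fin 4)⁆

noncomputable instance : LieRing (S k) := by unfold S; infer_instance
noncomputable instance : LieAlgebra k (S k) := by unfold S; infer_instance
noncomputable instance : LieRing (St k) := by unfold St; infer_instance
noncomputable instance : LieAlgebra k (St k) := by unfold St; infer_instance
noncomputable instance : LieRing (Sh k) := by unfold Sh; infer_instance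
noncomputable instance : LieAlgebra k (Sh k) := by unfold Sh; infer_instance



section Model
def Mdl (_B : (Fin 4 → k) → (Fin 4 → k) → (Fin 4 → k)) : Type u := (Fin 4 → k) × (Fin 4 → k)
variable (B : (Fin 4 → k) → (Fin 4 → k) → (Fin 4 → k))
class IsGoodB : Prop where
  add_left : ∀ x x' y, B (x + x') y = B x y + B x' y
  smul_left : ∀ (c : k) x y, B (c • x) y = c • B x y
  add_right : ∀ x y y', B x (y + y') = B x y + B x y'
  smul_right : ∀ (c : k) x y, B x (c • y) = c • B x y
  alt : ∀ x, B x x = 0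

namespace Mdl
instance : AddCommGroup (Mdl k B) := inferInstanceAs (AddCommGroup ((Fin 4 → k) × (Fin 4 → k)))
instance : Module k (Mdl k B) := inferInstanceAs (Module k ((Fin 4 → k) × (Fin 4 → k)))

variable {k B}
def mk (x y : Fin 4 → k) : Mdl k B := (x, y)
def pa (m : Mdl k B) : Fin 4 → k := (show (Fin 4 → k) × (Fin 4 → k) from m).1
def pb (m : Mdl k B) : Fin 4 → k := (show (Fin 4 → k) × (Fin 4 → k) from m).2

@[simp] lemma pa_mk (x y : Fin 4 → k) : pa (mk (B := B) x y) = x := rfl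
@[simp] lemma pb_mk (x y : Fin 4 → k) : pb (mk (B := B) x y) = y := rfl
@[simp] lemma pa_add (m n : Mdl k B) : pa (m + n) = pa m + pa n := rfl
@[simp] lemma pb_add (m n : Mdl k B) : pb (m + n) = pb m + pb n := rfl
@[simp] lemma pa_smul (c : k) (m : Mdl k B) : pa (c • m) = c • pa m := rfl
@[simp] lemma pb_smul (c : k) (m : Mdl k B) : pb (c • m) = c • pb m := rfl
@[simp] lemma pa_neg (m : Mdl k B) : pa (-m) = - pa m := rfl
@[simp] lemma pb_neg (m : Mdl k B) : pb (-m) = - pb m := rfl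
@[simp] lemma pa_zero : pa (0 : Mdl k B) = 0 := rfl
@[simp] lemma pb_zero : pb (0 : Mdl k B) = 0 := rfl

@[ext] lemma ext {m n : Mdl k B} (h1 : pa m = pa n) (h2 : pb m = pb n) : m = n := by
  cases m; cases n; exact Prod.ext h1 h2

lemma mk_eq_zero_iff {x y : Fin 4 → k} : mk (B := B) x y = 0 ↔ x = 0 ∧ y = 0 := by
  constructor
  · intro h; exact ⟨congrArg pa h, congrArg pb h⟩
  · rintro ⟨rfl, rfl⟩; rfl

variable [IsGoodB k B]

lemma zero_left (y : Fin 4 → k) : B 0 y = 0 := by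
  have := IsGoodB.smul_left (B := B) (0 : k) 0 y; simpa using this
lemma zero_right (x : Fin 4 → k) : B x 0 = 0 := by
  have := IsGoodB.smul_right (B := B) (0 : k) x 0; simpa using this

noncomputable instance : LieRing (Mdl k B) :=
  { (inferInstance : AddCommGroup (Mdl k B)) with
    bracket := fun m n => mk 0 (B (pa m) (pa n))
    add_lie := by intro x y z; ext <;> simp [IsGoodB.add_left]
    lie_add := by intro x y z; ext <;> simp [IsGoodB.add_right]
    lie_self := by intro x; ext <;> simp [IsGoodB.alt]
    leibniz_lie := by
      intro x y z
      show mk 0 (B (pa x) (pa (mk 0 _))) = mk 0 (B (pa (mk 0 _)) (pa z)) + mk 0 (B (pa y) (pa (mk 0 _)))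
      ext <;> simp [zero_left, zero_right] }

@[simp] lemma lie_def (m n : Mdl k B) : ⁅m, n⁆ = mk 0 (B (pa m) (pa n)) := rfl

noncomputable instance : LieAlgebra k (Mdl k B) :=
  { lie_smul := by intro c x y; ext <;> simp [IsGoodB.smul_right] }

end Mdl
end Model

section Quot

variable {k}
def lieQuotMk {L' : Type u} [LieRing L'] [LieAlgebra k L'] (I : LieIdeal k L') :
    L' →ₗ⁅k⁆ L' ⧸ I :=
  { Submodule.mkQ (I : Submodule k L') with
    map_lie' := by intro x y; rfl }

@[simp] lemma lieQuotMk_apply {L' : Type u} [LieRing L'] [LieAlgebra k L'] (I : LieIdeal k L')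
    (x : L') : lieQuotMk I x = LieSubmodule.Quotient.mk (N := I) x := rfl

lemma lieQuotMk_surjective {L' : Type u} [LieRing L'] [LieAlgebra k L'] (I : LieIdeal k L') :
    Function.Surjective (lieQuotMk (k := k) I) := Quot.mk_surjective

def lieQuotLift {L' : Type u} [LieRing L'] [LieAlgebra k L'] (I : LieIdeal k L')
    {L₂ : Type u} [LieRing L₂] [LieAlgebra k L₂] (f : L' →ₗ⁅k⁆ L₂)
    (h : ∀ x ∈ I, f x = 0) : (L' ⧸ I) →ₗ⁅k⁆ L₂ :=
  { Submodule.liftQ (I : Submodule k L') f.toLinearMap h with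
    map_lie' := by
      intro x y
      obtain ⟨x, rfl⟩ := lieQuotMk_surjective I x
      obtain ⟨y, rfl⟩ := lieQuotMk_surjective I y
      show Submodule.liftQ _ _ _ ⁅LieSubmodule.Quotient.mk (N := I) x, LieSubmodule.Quotient.mk (N := I) y⁆ = _
      rw [← LieSubmodule.Quotient.mk_bracket]
      exact f.map_lie x y }

@[simp] lemma lieQuotLift_mk {L' : Type u} [LieRing L'] [LieAlgebra k L'] (I : LieIdeal k L')
    {L₂ : Type u} [LieRing L₂] [LieAlgebra k L₂] (f : L' →ₗ⁅k⁆ L₂)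
    (h : ∀ x ∈ I, f x = 0) (x : L') : lieQuotLift I f h (lieQuotMk I x) = f x := rfl

variable (k)

noncomputable def prHom (r₁ r₂ : FreeLieAlgebra k (Fin 4)) :
    FreeLieAlgebra k (Fin 4) →ₗ⁅k⁆ classTwoQuot k (twoRelatorAlg k r₁ r₂) :=
  LieHom.comp
    (show twoRelatorAlg k r₁ r₂ →ₗ⁅k⁆ classTwoQuot k (twoRelatorAlg k r₁ r₂) from
      lieQuotMk (LieModule.lowerCentralSeries k (twoRelatorAlg k r₁ r₂) (twoRelatorAlg k r₁ r₂) 2))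
    (show FreeLieAlgebra k (Fin 4) →ₗ⁅k⁆ twoRelatorAlg k r₁ r₂ from
      lieQuotMk (LieSubmodule.lieSpan k (FreeLieAlgebra k (Fin 4)) {r₁, r₂}))

lemma prHom_surjective (r₁ r₂ : FreeLieAlgebra k (Fin 4)) :
    Function.Surjective (prHom k r₁ r₂) := by
  intro q
  obtain ⟨a, rfl⟩ := lieQuotMk_surjective
    (L' := twoRelatorAlg k r₁ r₂)
    (LieModule.lowerCentralSeries k (twoRelatorAlg k r₁ r₂) (twoRelatorAlg k r₁ r₂) 2) q
  obtain ⟨x, rfl⟩ := lieQuotMk_surjective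
    (LieSubmodule.lieSpan k (FreeLieAlgebra k (Fin 4)) {r₁, r₂}) a
  exact ⟨x, rfl⟩

lemma prHom_rel₁ (r₁ r₂ : FreeLieAlgebra k (Fin 4)) : prHom k r₁ r₂ r₁ = 0 := by
  have : lieQuotMk (k := k) (LieSubmodule.lieSpan k (FreeLieAlgebra k (Fin 4)) {r₁, r₂}) r₁ = 0 := by
    rw [lieQuotMk_apply, LieSubmodule.Quotient.mk_eq_zero']
    exact LieSubmodule.subset_lieSpan (by simp)
  show (lieQuotMk _) ((lieQuotMk _) r₁) = 0
  rw [this]; exact (lieQuotMk (L' := twoRelatorAlg k r₁ r₂)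
    (LieModule.lowerCentralSeries k (twoRelatorAlg k r₁ r₂) (twoRelatorAlg k r₁ r₂) 2)).toLinearMap.map_zero

lemma prHom_rel₂ (r₁ r₂ : FreeLieAlgebra k (Fin 4)) : prHom k r₁ r₂ r₂ = 0 := by
  have : lieQuotMk (k := k) (LieSubmodule.lieSpan k (FreeLieAlgebra k (Fin 4)) {r₁, r₂}) r₂ = 0 := by
    rw [lieQuotMk_apply, LieSubmodule.Quotient.mk_eq_zero']
    exact LieSubmodule.subset_lieSpan (by simp)
  show (lieQuotMk _) ((lieQuotMk _) r₂) = 0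
  rw [this]; exact (lieQuotMk (L' := twoRelatorAlg k r₁ r₂)
    (LieModule.lowerCentralSeries k (twoRelatorAlg k r₁ r₂) (twoRelatorAlg k r₁ r₂) 2)).toLinearMap.map_zero

lemma classTwoQuot_triple (A : Type u) [LieRing A] [LieAlgebra k A]
    (a b c : classTwoQuot k A) : ⁅⁅a, b⁆, c⁆ = 0 := by
  set I := LieModule.lowerCentralSeries k A A 2 with hI
  obtain ⟨x, rfl⟩ := lieQuotMk_surjective (L' := A) I a
  obtain ⟨y, rfl⟩ := lieQuotMk_surjective (L' := A) I b
  obtain ⟨z, rfl⟩ := lieQuotMk_surjective (L' := A) I c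
  have h3 : ⁅⁅lieQuotMk I x, lieQuotMk I y⁆, lieQuotMk I z⁆ = lieQuotMk I ⁅⁅x, y⁆, z⁆ := by
    rw [(lieQuotMk I).map_lie, (lieQuotMk I).map_lie]
  refine h3.trans ((LieSubmodule.Quotient.mk_eq_zero' (N := I)).mpr ?_)
  have h1 : ⁅x, y⁆ ∈ LieModule.lowerCentralSeries k A A 1 := by
    rw [show (1 : ℕ) = 0 + 1 from rfl, LieModule.lowerCentralSeries_succ,
      LieModule.lowerCentralSeries_zero]
    exact LieSubmodule.lie_mem_lie (LieSubmodule.mem_top x) (LieSubmodule.mem_top y)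
  have h2 : ⁅z, ⁅x, y⁆⁆ ∈ LieModule.lowerCentralSeries k A A 2 := by
    rw [show (2 : ℕ) = 1 + 1 from rfl, LieModule.lowerCentralSeries_succ]
    exact LieSubmodule.lie_mem_lie (LieSubmodule.mem_top z) h1
  have h4 : ⁅⁅x, y⁆, z⁆ = -⁅z, ⁅x, y⁆⁆ := by rw [← lie_skew]
  rw [h4]
  exact neg_mem h2

lemma classTwoQuot_triple' (A : Type u) [LieRing A] [LieAlgebra k A]
    (a b c : classTwoQuot k A) : ⁅a, ⁅b, c⁆⁆ = 0 := by
  rw [← lie_skew, classTwoQuot_triple, neg_zero]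

-- the lifted hom to a model
variable (B : (Fin 4 → k) → (Fin 4 → k) → (Fin 4 → k)) [IsGoodB k B]

noncomputable def φfree : FreeLieAlgebra k (Fin 4) →ₗ⁅k⁆ Mdl k B :=
  FreeLieAlgebra.lift k fun i => Mdl.mk (B := B) (Pi.single i 1) 0

noncomputable def ΦHom (r₁ r₂ : FreeLieAlgebra k (Fin 4))
    (h₁ : φfree k B r₁ = 0) (h₂ : φfree k B r₂ = 0) :
    classTwoQuot k (twoRelatorAlg k r₁ r₂) →ₗ⁅k⁆ Mdl k B := by
  have hker1 : ∀ x ∈ LieSubmodule.lieSpan k (FreeLieAlgebra k (Fin 4))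
      ({r₁, r₂} : Set (FreeLieAlgebra k (Fin 4))), φfree k B x = 0 := by
    intro x hx
    have hle : LieSubmodule.lieSpan k (FreeLieAlgebra k (Fin 4))
        ({r₁, r₂} : Set (FreeLieAlgebra k (Fin 4))) ≤ (φfree k B).ker := by
      rw [LieSubmodule.lieSpan_le]
      rintro y (rfl | rfl)
      · exact LieHom.mem_ker.mpr h₁
      · exact LieHom.mem_ker.mpr h₂
    exact LieHom.mem_ker.mp (hle hx)
  let φ1 : twoRelatorAlg k r₁ r₂ →ₗ⁅k⁆ Mdl k B :=
    show (FreeLieAlgebra k (Fin 4) ⧸ LieSubmodule.lieSpan k (FreeLieAlgebra k (Fin 4))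
      ({r₁, r₂} : Set (FreeLieAlgebra k (Fin 4)))) →ₗ⁅k⁆ Mdl k B from
      lieQuotLift _ (φfree k B) hker1
  -- first components of images of brackets vanish
  have hpa : ∀ z ∈ LieModule.lowerCentralSeries k (twoRelatorAlg k r₁ r₂)
      (twoRelatorAlg k r₁ r₂) 1, Mdl.pa (φ1 z) = 0 := by
    intro z hz
    let K : LieSubmodule k (twoRelatorAlg k r₁ r₂) (twoRelatorAlg k r₁ r₂) :=
      { carrier := {z | Mdl.pa (φ1 z) = 0}
        add_mem' := by intro a b ha hb; simp only [Set.mem_setOf_eq, map_add] at *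
                       rw [Mdl.pa_add, ha, hb, add_zero]
        zero_mem' := by simp only [Set.mem_setOf_eq, map_zero]; rfl
        smul_mem' := by intro c a ha; simp only [Set.mem_setOf_eq, map_smul] at *
                        rw [Mdl.pa_smul, ha, smul_zero]
        lie_mem := by intro x m hm; simp only [Set.mem_setOf_eq, LieHom.map_lie]
                      rw [Mdl.lie_def]; rfl }
    have hle : LieModule.lowerCentralSeries k (twoRelatorAlg k r₁ r₂)
        (twoRelatorAlg k r₁ r₂) 1 ≤ K := by
      rw [show (1 : ℕ) = 0 + 1 from rfl, LieModule.lowerCentralSeries_succ,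
        LieModule.lowerCentralSeries_zero, LieSubmodule.lieIdeal_oper_eq_span,
        LieSubmodule.lieSpan_le]
      rintro z ⟨x, n, rfl⟩
      show Mdl.pa (φ1 ⁅(x : twoRelatorAlg k r₁ r₂), (n : twoRelatorAlg k r₁ r₂)⁆) = 0
      rw [LieHom.map_lie, Mdl.lie_def]; rfl
    exact hle hz
  have hker2 : ∀ x ∈ LieModule.lowerCentralSeries k (twoRelatorAlg k r₁ r₂)
      (twoRelatorAlg k r₁ r₂) 2, φ1 x = 0 := by
    intro x hx
    rw [show (2 : ℕ) = 1 + 1 from rfl, LieModule.lowerCentralSeries_succ] at hx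
    have hle : (⁅(⊤ : LieIdeal k (twoRelatorAlg k r₁ r₂)),
        LieModule.lowerCentralSeries k (twoRelatorAlg k r₁ r₂) (twoRelatorAlg k r₁ r₂) 1⁆ :
        LieSubmodule k (twoRelatorAlg k r₁ r₂) (twoRelatorAlg k r₁ r₂)) ≤ φ1.ker := by
      rw [LieSubmodule.lieIdeal_oper_eq_span, LieSubmodule.lieSpan_le]
      rintro z ⟨x', n, rfl⟩
      rw [SetLike.mem_coe, LieHom.mem_ker, LieHom.map_lie, Mdl.lie_def]
      have hn : Mdl.pa (φ1 (n : twoRelatorAlg k r₁ r₂)) = 0 := hpa _ n.2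
      rw [hn, Mdl.zero_right (B := B) (Mdl.pa (φ1 (x' : twoRelatorAlg k r₁ r₂)))]
      rfl
    exact LieHom.mem_ker.mp (hle hx)
  exact show (twoRelatorAlg k r₁ r₂ ⧸ LieModule.lowerCentralSeries k (twoRelatorAlg k r₁ r₂)
    (twoRelatorAlg k r₁ r₂) 2) →ₗ⁅k⁆ Mdl k B from lieQuotLift _ φ1 hker2

end Quot

def B1 (v w : Fin 4 → k) : Fin 4 → k :=
  ![v 0 * w 2 - v 2 * w 0, (v 0 * w 3 - v 3 * w 0) + (v 1 * w 2 - v 2 * w 1),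
    v 1 * w 3 - v 3 * w 1, v 2 * w 3 - v 3 * w 2]

@[simp] lemma B1_0 (v w : Fin 4 → k) : B1 k v w 0 = v 0 * w 2 - v 2 * w 0 := rfl
@[simp] lemma B1_1 (v w : Fin 4 → k) :
    B1 k v w 1 = (v 0 * w 3 - v 3 * w 0) + (v 1 * w 2 - v 2 * w 1) := rfl
@[simp] lemma B1_2 (v w : Fin 4 → k) : B1 k v w 2 = v 1 * w 3 - v 3 * w 1 := rfl
@[simp] lemma B1_3 (v w : Fin 4 → k) : B1 k v w 3 = v 2 * w 3 - v 3 * w 2 := rfl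

instance : IsGoodB k (B1 k) where
  add_left := by intro x x' y; funext i; fin_cases i <;> simp <;> ring
  smul_left := by intro c x y; funext i; fin_cases i <;> simp <;> ring
  add_right := by intro x y y'; funext i; fin_cases i <;> simp <;> ring
  smul_right := by intro c x y; funext i; fin_cases i <;> simp <;> ring
  alt := by intro x; funext i; fin_cases i <;> simp <;> ring

-- helper: sum of coordinates times singles
lemma single_comb (v : Fin 4 → k) :
    v 0 • (Pi.single 0 1 : Fin 4 → k) + v 1 • (Pi.single 1 1 : Fin 4 → k)
      + v 2 • (Pi.single 2 1 : Fin 4 → k) + v 3 • (Pi.single 3 1 : Fin 4 → k) = v := by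
  funext t; fin_cases t <;> simp [Pi.single_apply]

namespace M1
noncomputable def r1 : FreeLieAlgebra k (Fin 4) := ⁅of k (0 : Fin 4), of k (1 : Fin 4)⁆
noncomputable def r2 : FreeLieAlgebra k (Fin 4) :=
  ⁅of k (2 : Fin 4), of k (1 : Fin 4)⁆ + ⁅of k (0 : Fin 4), of k (3 : Fin 4)⁆

lemma hφ1 : φfree k (B1 k) (r1 k) = 0 := by
  rw [r1]
  simp only [LieHom.map_lie, φfree, FreeLieAlgebra.lift_of_apply]
  rw [Mdl.lie_def, Mdl.pa_mk, Mdl.pa_mk, Mdl.mk_eq_zero_iff]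
  refine ⟨rfl, ?_⟩
  funext i; fin_cases i <;> simp [Pi.single_apply]

lemma hφ2 : φfree k (B1 k) (r2 k) = 0 := by
  rw [r2]
  simp only [map_add, LieHom.map_lie, φfree, FreeLieAlgebra.lift_of_apply]
  rw [Mdl.lie_def, Mdl.lie_def]
  simp only [Mdl.pa_mk]
  refine Mdl.ext ?_ ?_
  · simp
  · show B1 k (Pi.single 2 1) (Pi.single 1 1) + B1 k (Pi.single 0 1) (Pi.single 3 1) = 0
    funext i; fin_cases i <;> simp [Pi.single_apply]

noncomputable def Φ : classTwoQuot k (twoRelatorAlg k (r1 k) (r2 k)) →ₗ⁅k⁆ Mdl k (B1 k) :=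
  ΦHom k (B1 k) (r1 k) (r2 k) (hφ1 k) (hφ2 k)

noncomputable def X (i : Fin 4) : classTwoQuot k (twoRelatorAlg k (r1 k) (r2 k)) :=
  prHom k (r1 k) (r2 k) (of k i)

lemma ΦX (i : Fin 4) : Φ k (X k i) = Mdl.mk (Pi.single i 1) 0 := by
  show Φ k (prHom k (r1 k) (r2 k) (of k i)) = _
  have h : Φ k (prHom k (r1 k) (r2 k) (of k i)) = φfree k (B1 k) (of k i) := rfl
  rw [h, φfree, FreeLieAlgebra.lift_of_apply]

@[simp] lemma trip (a b c : classTwoQuot k (twoRelatorAlg k (r1 k) (r2 k))) :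
    ⁅⁅a, b⁆, c⁆ = 0 := classTwoQuot_triple k _ a b c
@[simp] lemma trip' (a b c : classTwoQuot k (twoRelatorAlg k (r1 k) (r2 k))) :
    ⁅a, ⁅b, c⁆⁆ = 0 := classTwoQuot_triple' k _ a b c

lemma t01 : ⁅X k 0, X k 1⁆ = 0 := by
  have := prHom_rel₁ k (r1 k) (r2 k)
  rwa [r1, LieHom.map_lie] at this
lemma t10 : ⁅X k 1, X k 0⁆ = 0 := by rw [← lie_skew, t01, neg_zero]
lemma t21 : ⁅X k 2, X k 1⁆ = -⁅X k 0, X k 3⁆ := by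
  have := prHom_rel₂ k (r1 k) (r2 k)
  rw [r2, map_add, LieHom.map_lie, LieHom.map_lie] at this
  exact eq_neg_of_add_eq_zero_left this
lemma t12 : ⁅X k 1, X k 2⁆ = ⁅X k 0, X k 3⁆ := by
  rw [← lie_skew, t21, neg_neg]
lemma t20 : ⁅X k 2, X k 0⁆ = -⁅X k 0, X k 2⁆ := by rw [← lie_skew]
lemma t30 : ⁅X k 3, X k 0⁆ = -⁅X k 0, X k 3⁆ := by rw [← lie_skew]
lemma t31 : ⁅X k 3, X k 1⁆ = -⁅X k 1, X k 3⁆ := by rw [← lie_skew]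
lemma t32 : ⁅X k 3, X k 2⁆ = -⁅X k 2, X k 3⁆ := by rw [← lie_skew]

noncomputable def Ψ : Mdl k (B1 k) →ₗ⁅k⁆ classTwoQuot k (twoRelatorAlg k (r1 k) (r2 k)) where
  toFun m := Mdl.pa m 0 • X k 0 + Mdl.pa m 1 • X k 1 + Mdl.pa m 2 • X k 2 + Mdl.pa m 3 • X k 3
    + Mdl.pb m 0 • ⁅X k 0, X k 2⁆ + Mdl.pb m 1 • ⁅X k 0, X k 3⁆
    + Mdl.pb m 2 • ⁅X k 1, X k 3⁆ + Mdl.pb m 3 • ⁅X k 2, X k 3⁆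
  map_add' m n := by
    simp only [Mdl.pa_add, Mdl.pb_add, Pi.add_apply]; module
  map_smul' c m := by
    simp only [Mdl.pa_smul, Mdl.pb_smul, Pi.smul_apply, RingHom.id_apply, smul_eq_mul]; module
  map_lie' := by
    intro m n
    simp only [Mdl.lie_def, Mdl.pa_mk, Mdl.pb_mk, B1_0, B1_1, B1_2, B1_3, Pi.zero_apply,
      zero_smul, zero_add, add_zero, lie_add, add_lie, smul_lie, lie_smul, lie_self,
      trip, trip', t01, t10, t12, t20, t21, t30, t31, t32, smul_zero, smul_neg]
    module

lemma Ψapp (m : Mdl k (B1 k)) : Ψ k m =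
    Mdl.pa m 0 • X k 0 + Mdl.pa m 1 • X k 1 + Mdl.pa m 2 • X k 2 + Mdl.pa m 3 • X k 3
    + Mdl.pb m 0 • ⁅X k 0, X k 2⁆ + Mdl.pb m 1 • ⁅X k 0, X k 3⁆
    + Mdl.pb m 2 • ⁅X k 1, X k 3⁆ + Mdl.pb m 3 • ⁅X k 2, X k 3⁆ := rfl

lemma Φlie (i j : Fin 4) : Φ k ⁅X k i, X k j⁆ =
    Mdl.mk 0 (B1 k (Pi.single i 1) (Pi.single j 1)) := by
  rw [LieHom.map_lie, ΦX, ΦX, Mdl.lie_def, Mdl.pa_mk, Mdl.pa_mk]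

lemma Bs02 : B1 k (Pi.single 0 1) (Pi.single 2 1) = Pi.single 0 1 := by
  funext i; fin_cases i <;> simp [Pi.single_apply]
lemma Bs03 : B1 k (Pi.single 0 1) (Pi.single 3 1) = Pi.single 1 1 := by
  funext i; fin_cases i <;> simp [Pi.single_apply]
lemma Bs13 : B1 k (Pi.single 1 1) (Pi.single 3 1) = Pi.single 2 1 := by
  funext i; fin_cases i <;> simp [Pi.single_apply]
lemma Bs23 : B1 k (Pi.single 2 1) (Pi.single 3 1) = Pi.single 3 1 := by
  funext i; fin_cases i <;> simp [Pi.single_apply]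

lemma ΦΨ (m : Mdl k (B1 k)) : Φ k (Ψ k m) = m := by
  rw [Ψapp]
  simp only [map_add, map_smul, ΦX, Φlie, Bs02, Bs03, Bs13, Bs23]
  refine Mdl.ext ?_ ?_
  · simp only [Mdl.pa_add, Mdl.pa_smul, Mdl.pa_mk, smul_zero, add_zero]
    exact single_comb k _
  · simp only [Mdl.pb_add, Mdl.pb_smul, Mdl.pb_mk, smul_zero, zero_add]
    exact single_comb k _

lemma ΨΦ (q : classTwoQuot k (twoRelatorAlg k (r1 k) (r2 k))) : Ψ k (Φ k q) = q := by
  obtain ⟨x, rfl⟩ := prHom_surjective k (r1 k) (r2 k) q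
  have h : ((Ψ k).comp ((Φ k).comp (prHom k (r1 k) (r2 k)))) = prHom k (r1 k) (r2 k) := by
    apply FreeLieAlgebra.hom_ext
    intro i
    show Ψ k (Φ k (X k i)) = X k i
    rw [ΦX, Ψapp]
    fin_cases i <;>
      simp [Pi.single_apply, Mdl.pa_mk, Mdl.pb_mk]
  exact LieHom.congr_fun h x

noncomputable def E1 : classTwoQuot k (twoRelatorAlg k (r1 k) (r2 k)) ≃ₗ⁅k⁆ Mdl k (B1 k) :=
  LieEquiv.ofBijective (Φ k)
    ⟨fun a b h => by rw [← ΨΦ k a, ← ΨΦ k b, h], fun m => ⟨Ψ k m, ΦΨ k m⟩⟩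

end M1

def B2 (v w : Fin 4 → k) : Fin 4 → k :=
  ![v 0 * w 3 - v 3 * w 0, v 1 * w 2 - v 2 * w 1, v 1 * w 3 - v 3 * w 1, v 2 * w 3 - v 3 * w 2]

@[simp] lemma B2_0 (v w : Fin 4 → k) : B2 k v w 0 = v 0 * w 3 - v 3 * w 0 := rfl
@[simp] lemma B2_1 (v w : Fin 4 → k) : B2 k v w 1 = v 1 * w 2 - v 2 * w 1 := rfl
@[simp] lemma B2_2 (v w : Fin 4 → k) : B2 k v w 2 = v 1 * w 3 - v 3 * w 1 := rfl
@[simp] lemma B2_3 (v w : Fin 4 → k) : B2 k v w 3 = v 2 * w 3 - v 3 * w 2 := rfl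

instance : IsGoodB k (B2 k) where
  add_left := by intro x x' y; funext i; fin_cases i <;> simp <;> ring
  smul_left := by intro c x y; funext i; fin_cases i <;> simp <;> ring
  add_right := by intro x y y'; funext i; fin_cases i <;> simp <;> ring
  smul_right := by intro c x y; funext i; fin_cases i <;> simp <;> ring
  alt := by intro x; funext i; fin_cases i <;> simp <;> ring

def B3 (v w : Fin 4 → k) : Fin 4 → k :=
  ![v 0 * w 2 - v 2 * w 0, v 0 * w 3 - v 3 * w 0, v 1 * w 2 - v 2 * w 1, v 1 * w 3 - v 3 * w 1]

@[simp] lemma B3_0 (v w : Fin 4 → k) : B3 k v w 0 = v 0 * w 2 - v 2 * w 0 := rfl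
@[simp] lemma B3_1 (v w : Fin 4 → k) : B3 k v w 1 = v 0 * w 3 - v 3 * w 0 := rfl
@[simp] lemma B3_2 (v w : Fin 4 → k) : B3 k v w 2 = v 1 * w 2 - v 2 * w 1 := rfl
@[simp] lemma B3_3 (v w : Fin 4 → k) : B3 k v w 3 = v 1 * w 3 - v 3 * w 1 := rfl

instance : IsGoodB k (B3 k) where
  add_left := by intro x x' y; funext i; fin_cases i <;> simp <;> ring
  smul_left := by intro c x y; funext i; fin_cases i <;> simp <;> ring
  add_right := by intro x y y'; funext i; fin_cases i <;> simp <;> ring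
  smul_right := by intro c x y; funext i; fin_cases i <;> simp <;> ring
  alt := by intro x; funext i; fin_cases i <;> simp <;> ring

namespace M2
noncomputable def r1 : FreeLieAlgebra k (Fin 4) := ⁅of k (0 : Fin 4), of k (1 : Fin 4)⁆
noncomputable def r2 : FreeLieAlgebra k (Fin 4) := ⁅of k (0 : Fin 4), of k (2 : Fin 4)⁆

lemma hφ1 : φfree k (B2 k) (r1 k) = 0 := by
  rw [r1]
  simp only [LieHom.map_lie, φfree, FreeLieAlgebra.lift_of_apply]
  rw [Mdl.lie_def, Mdl.pa_mk, Mdl.pa_mk, Mdl.mk_eq_zero_iff]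
  refine ⟨rfl, ?_⟩
  funext i; fin_cases i <;> simp [Pi.single_apply]

lemma hφ2 : φfree k (B2 k) (r2 k) = 0 := by
  rw [r2]
  simp only [LieHom.map_lie, φfree, FreeLieAlgebra.lift_of_apply]
  rw [Mdl.lie_def, Mdl.pa_mk, Mdl.pa_mk, Mdl.mk_eq_zero_iff]
  refine ⟨rfl, ?_⟩
  funext i; fin_cases i <;> simp [Pi.single_apply]

noncomputable def Φ : classTwoQuot k (twoRelatorAlg k (r1 k) (r2 k)) →ₗ⁅k⁆ Mdl k (B2 k) :=
  ΦHom k (B2 k) (r1 k) (r2 k) (hφ1 k) (hφ2 k)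

noncomputable def X (i : Fin 4) : classTwoQuot k (twoRelatorAlg k (r1 k) (r2 k)) :=
  prHom k (r1 k) (r2 k) (of k i)

lemma ΦX (i : Fin 4) : Φ k (X k i) = Mdl.mk (Pi.single i 1) 0 := by
  show Φ k (prHom k (r1 k) (r2 k) (of k i)) = _
  have h : Φ k (prHom k (r1 k) (r2 k) (of k i)) = φfree k (B2 k) (of k i) := rfl
  rw [h, φfree, FreeLieAlgebra.lift_of_apply]

@[simp] lemma trip (a b c : classTwoQuot k (twoRelatorAlg k (r1 k) (r2 k))) :
    ⁅⁅a, b⁆, c⁆ = 0 := classTwoQuot_triple k _ a b c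
@[simp] lemma trip' (a b c : classTwoQuot k (twoRelatorAlg k (r1 k) (r2 k))) :
    ⁅a, ⁅b, c⁆⁆ = 0 := classTwoQuot_triple' k _ a b c

lemma t01 : ⁅X k 0, X k 1⁆ = 0 := by
  have := prHom_rel₁ k (r1 k) (r2 k)
  rwa [r1, LieHom.map_lie] at this
lemma t10 : ⁅X k 1, X k 0⁆ = 0 := by rw [← lie_skew, t01, neg_zero]
lemma t02 : ⁅X k 0, X k 2⁆ = 0 := by
  have := prHom_rel₂ k (r1 k) (r2 k)
  rwa [r2, LieHom.map_lie] at this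
lemma t20 : ⁅X k 2, X k 0⁆ = 0 := by rw [← lie_skew, t02, neg_zero]
lemma t21 : ⁅X k 2, X k 1⁆ = -⁅X k 1, X k 2⁆ := by rw [← lie_skew]
lemma t30 : ⁅X k 3, X k 0⁆ = -⁅X k 0, X k 3⁆ := by rw [← lie_skew]
lemma t31 : ⁅X k 3, X k 1⁆ = -⁅X k 1, X k 3⁆ := by rw [← lie_skew]
lemma t32 : ⁅X k 3, X k 2⁆ = -⁅X k 2, X k 3⁆ := by rw [← lie_skew]

noncomputable def Ψ : Mdl k (B2 k) →ₗ⁅k⁆ classTwoQuot k (twoRelatorAlg k (r1 k) (r2 k)) where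
  toFun m := Mdl.pa m 0 • X k 0 + Mdl.pa m 1 • X k 1 + Mdl.pa m 2 • X k 2 + Mdl.pa m 3 • X k 3
    + Mdl.pb m 0 • ⁅X k 0, X k 3⁆ + Mdl.pb m 1 • ⁅X k 1, X k 2⁆
    + Mdl.pb m 2 • ⁅X k 1, X k 3⁆ + Mdl.pb m 3 • ⁅X k 2, X k 3⁆
  map_add' m n := by
    simp only [Mdl.pa_add, Mdl.pb_add, Pi.add_apply]; module
  map_smul' c m := by
    simp only [Mdl.pa_smul, Mdl.pb_smul, Pi.smul_apply, RingHom.id_apply, smul_eq_mul]; module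
  map_lie' := by
    intro m n
    simp only [Mdl.lie_def, Mdl.pa_mk, Mdl.pb_mk, B2_0, B2_1, B2_2, B2_3, Pi.zero_apply,
      zero_smul, zero_add, add_zero, lie_add, add_lie, smul_lie, lie_smul, lie_self,
      trip, trip', t01, t10, t02, t20, t21, t30, t31, t32, smul_zero, smul_neg]
    module

lemma Ψapp (m : Mdl k (B2 k)) : Ψ k m =
    Mdl.pa m 0 • X k 0 + Mdl.pa m 1 • X k 1 + Mdl.pa m 2 • X k 2 + Mdl.pa m 3 • X k 3
    + Mdl.pb m 0 • ⁅X k 0, X k 3⁆ + Mdl.pb m 1 • ⁅X k 1, X k 2⁆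
    + Mdl.pb m 2 • ⁅X k 1, X k 3⁆ + Mdl.pb m 3 • ⁅X k 2, X k 3⁆ := rfl

lemma Φlie (i j : Fin 4) : Φ k ⁅X k i, X k j⁆ =
    Mdl.mk 0 (B2 k (Pi.single i 1) (Pi.single j 1)) := by
  rw [LieHom.map_lie, ΦX, ΦX, Mdl.lie_def, Mdl.pa_mk, Mdl.pa_mk]

lemma Bs03 : B2 k (Pi.single 0 1) (Pi.single 3 1) = Pi.single 0 1 := by
  funext i; fin_cases i <;> simp [Pi.single_apply]
lemma Bs12 : B2 k (Pi.single 1 1) (Pi.single 2 1) = Pi.single 1 1 := by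
  funext i; fin_cases i <;> simp [Pi.single_apply]
lemma Bs13 : B2 k (Pi.single 1 1) (Pi.single 3 1) = Pi.single 2 1 := by
  funext i; fin_cases i <;> simp [Pi.single_apply]
lemma Bs23 : B2 k (Pi.single 2 1) (Pi.single 3 1) = Pi.single 3 1 := by
  funext i; fin_cases i <;> simp [Pi.single_apply]

lemma ΦΨ (m : Mdl k (B2 k)) : Φ k (Ψ k m) = m := by
  rw [Ψapp]
  simp only [map_add, map_smul, ΦX, Φlie, Bs03, Bs12, Bs13, Bs23]
  refine Mdl.ext ?_ ?_
  · simp only [Mdl.pa_add, Mdl.pa_smul, Mdl.pa_mk, smul_zero, add_zero]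
    exact single_comb k _
  · simp only [Mdl.pb_add, Mdl.pb_smul, Mdl.pb_mk, smul_zero, zero_add]
    exact single_comb k _

lemma ΨΦ (q : classTwoQuot k (twoRelatorAlg k (r1 k) (r2 k))) : Ψ k (Φ k q) = q := by
  obtain ⟨x, rfl⟩ := prHom_surjective k (r1 k) (r2 k) q
  have h : ((Ψ k).comp ((Φ k).comp (prHom k (r1 k) (r2 k)))) = prHom k (r1 k) (r2 k) := by
    apply FreeLieAlgebra.hom_ext
    intro i
    show Ψ k (Φ k (X k i)) = X k i
    rw [ΦX, Ψapp]
    fin_cases i <;> simp [Pi.single_apply, Mdl.pa_mk, Mdl.pb_mk]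
  exact LieHom.congr_fun h x

noncomputable def E2 : classTwoQuot k (twoRelatorAlg k (r1 k) (r2 k)) ≃ₗ⁅k⁆ Mdl k (B2 k) :=
  LieEquiv.ofBijective (Φ k)
    ⟨fun a b h => by rw [← ΨΦ k a, ← ΨΦ k b, h], fun m => ⟨Ψ k m, ΦΨ k m⟩⟩

end M2

namespace M3
noncomputable def r1 : FreeLieAlgebra k (Fin 4) := ⁅of k (0 : Fin 4), of k (1 : Fin 4)⁆
noncomputable def r2 : FreeLieAlgebra k (Fin 4) := ⁅of k (3 : Fin 4), of k (2 : Fin 4)⁆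

lemma hφ1 : φfree k (B3 k) (r1 k) = 0 := by
  rw [r1]
  simp only [LieHom.map_lie, φfree, FreeLieAlgebra.lift_of_apply]
  rw [Mdl.lie_def, Mdl.pa_mk, Mdl.pa_mk, Mdl.mk_eq_zero_iff]
  refine ⟨rfl, ?_⟩
  funext i; fin_cases i <;> simp [Pi.single_apply]

lemma hφ2 : φfree k (B3 k) (r2 k) = 0 := by
  rw [r2]
  simp only [LieHom.map_lie, φfree, FreeLieAlgebra.lift_of_apply]
  rw [Mdl.lie_def, Mdl.pa_mk, Mdl.pa_mk, Mdl.mk_eq_zero_iff]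
  refine ⟨rfl, ?_⟩
  funext i; fin_cases i <;> simp [Pi.single_apply]

noncomputable def Φ : classTwoQuot k (twoRelatorAlg k (r1 k) (r2 k)) →ₗ⁅k⁆ Mdl k (B3 k) :=
  ΦHom k (B3 k) (r1 k) (r2 k) (hφ1 k) (hφ2 k)

noncomputable def X (i : Fin 4) : classTwoQuot k (twoRelatorAlg k (r1 k) (r2 k)) :=
  prHom k (r1 k) (r2 k) (of k i)

lemma ΦX (i : Fin 4) : Φ k (X k i) = Mdl.mk (Pi.single i 1) 0 := by
  show Φ k (prHom k (r1 k) (r2 k) (of k i)) = _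
  have h : Φ k (prHom k (r1 k) (r2 k) (of k i)) = φfree k (B3 k) (of k i) := rfl
  rw [h, φfree, FreeLieAlgebra.lift_of_apply]

@[simp] lemma trip (a b c : classTwoQuot k (twoRelatorAlg k (r1 k) (r2 k))) :
    ⁅⁅a, b⁆, c⁆ = 0 := classTwoQuot_triple k _ a b c
@[simp] lemma trip' (a b c : classTwoQuot k (twoRelatorAlg k (r1 k) (r2 k))) :
    ⁅a, ⁅b, c⁆⁆ = 0 := classTwoQuot_triple' k _ a b c

lemma t01 : ⁅X k 0, X k 1⁆ = 0 := by
  have := prHom_rel₁ k (r1 k) (r2 k)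
  rwa [r1, LieHom.map_lie] at this
lemma t10 : ⁅X k 1, X k 0⁆ = 0 := by rw [← lie_skew, t01, neg_zero]
lemma t32 : ⁅X k 3, X k 2⁆ = 0 := by
  have := prHom_rel₂ k (r1 k) (r2 k)
  rwa [r2, LieHom.map_lie] at this
lemma t23 : ⁅X k 2, X k 3⁆ = 0 := by rw [← lie_skew, t32, neg_zero]
lemma t20 : ⁅X k 2, X k 0⁆ = -⁅X k 0, X k 2⁆ := by rw [← lie_skew]
lemma t30 : ⁅X k 3, X k 0⁆ = -⁅X k 0, X k 3⁆ := by rw [← lie_skew]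
lemma t21 : ⁅X k 2, X k 1⁆ = -⁅X k 1, X k 2⁆ := by rw [← lie_skew]
lemma t31 : ⁅X k 3, X k 1⁆ = -⁅X k 1, X k 3⁆ := by rw [← lie_skew]

noncomputable def Ψ : Mdl k (B3 k) →ₗ⁅k⁆ classTwoQuot k (twoRelatorAlg k (r1 k) (r2 k)) where
  toFun m := Mdl.pa m 0 • X k 0 + Mdl.pa m 1 • X k 1 + Mdl.pa m 2 • X k 2 + Mdl.pa m 3 • X k 3
    + Mdl.pb m 0 • ⁅X k 0, X k 2⁆ + Mdl.pb m 1 • ⁅X k 0, X k 3⁆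
    + Mdl.pb m 2 • ⁅X k 1, X k 2⁆ + Mdl.pb m 3 • ⁅X k 1, X k 3⁆
  map_add' m n := by
    simp only [Mdl.pa_add, Mdl.pb_add, Pi.add_apply]; module
  map_smul' c m := by
    simp only [Mdl.pa_smul, Mdl.pb_smul, Pi.smul_apply, RingHom.id_apply, smul_eq_mul]; module
  map_lie' := by
    intro m n
    simp only [Mdl.lie_def, Mdl.pa_mk, Mdl.pb_mk, B3_0, B3_1, B3_2, B3_3, Pi.zero_apply,
      zero_smul, zero_add, add_zero, lie_add, add_lie, smul_lie, lie_smul, lie_self,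
      trip, trip', t01, t10, t32, t23, t20, t30, t21, t31, smul_zero, smul_neg]
    module

lemma Ψapp (m : Mdl k (B3 k)) : Ψ k m =
    Mdl.pa m 0 • X k 0 + Mdl.pa m 1 • X k 1 + Mdl.pa m 2 • X k 2 + Mdl.pa m 3 • X k 3
    + Mdl.pb m 0 • ⁅X k 0, X k 2⁆ + Mdl.pb m 1 • ⁅X k 0, X k 3⁆
    + Mdl.pb m 2 • ⁅X k 1, X k 2⁆ + Mdl.pb m 3 • ⁅X k 1, X k 3⁆ := rfl

lemma Φlie (i j : Fin 4) : Φ k ⁅X k i, X k j⁆ =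
    Mdl.mk 0 (B3 k (Pi.single i 1) (Pi.single j 1)) := by
  rw [LieHom.map_lie, ΦX, ΦX, Mdl.lie_def, Mdl.pa_mk, Mdl.pa_mk]

lemma Bs02 : B3 k (Pi.single 0 1) (Pi.single 2 1) = Pi.single 0 1 := by
  funext i; fin_cases i <;> simp [Pi.single_apply]
lemma Bs03 : B3 k (Pi.single 0 1) (Pi.single 3 1) = Pi.single 1 1 := by
  funext i; fin_cases i <;> simp [Pi.single_apply]
lemma Bs12 : B3 k (Pi.single 1 1) (Pi.single 2 1) = Pi.single 2 1 := by
  funext i; fin_cases i <;> simp [Pi.single_apply]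
lemma Bs13 : B3 k (Pi.single 1 1) (Pi.single 3 1) = Pi.single 3 1 := by
  funext i; fin_cases i <;> simp [Pi.single_apply]

lemma ΦΨ (m : Mdl k (B3 k)) : Φ k (Ψ k m) = m := by
  rw [Ψapp]
  simp only [map_add, map_smul, ΦX, Φlie, Bs02, Bs03, Bs12, Bs13]
  refine Mdl.ext ?_ ?_
  · simp only [Mdl.pa_add, Mdl.pa_smul, Mdl.pa_mk, smul_zero, add_zero]
    exact single_comb k _
  · simp only [Mdl.pb_add, Mdl.pb_smul, Mdl.pb_mk, smul_zero, zero_add]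
    exact single_comb k _

lemma ΨΦ (q : classTwoQuot k (twoRelatorAlg k (r1 k) (r2 k))) : Ψ k (Φ k q) = q := by
  obtain ⟨x, rfl⟩ := prHom_surjective k (r1 k) (r2 k) q
  have h : ((Ψ k).comp ((Φ k).comp (prHom k (r1 k) (r2 k)))) = prHom k (r1 k) (r2 k) := by
    apply FreeLieAlgebra.hom_ext
    intro i
    show Ψ k (Φ k (X k i)) = X k i
    rw [ΦX, Ψapp]
    fin_cases i <;> simp [Pi.single_apply, Mdl.pa_mk, Mdl.pb_mk]
  exact LieHom.congr_fun h x

noncomputable def E3 : classTwoQuot k (twoRelatorAlg k (r1 k) (r2 k)) ≃ₗ⁅k⁆ Mdl k (B3 k) :=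
  LieEquiv.ofBijective (Φ k)
    ⟨fun a b h => by rw [← ΨΦ k a, ← ΨΦ k b, h], fun m => ⟨Ψ k m, ΦΨ k m⟩⟩

end M3

section Invariants

def P1 (A : Type u) [LieRing A] [LieAlgebra k A] : Prop :=
  ∃ v : A, (∃ w : A, ⁅v, w⁆ ≠ 0) ∧
    ∀ w w' : A, ∃ a b : k, (a ≠ 0 ∨ b ≠ 0) ∧ a • ⁅v, w⁆ + b • ⁅v, w'⁆ = 0

def P2 (A : Type u) [LieRing A] [LieAlgebra k A] : Prop :=
  ∃ v₁ v₂ w₁ w₂ : A, ⁅v₁, v₂⁆ = 0 ∧ ⁅w₁, w₂⁆ = 0 ∧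
    (∀ c : k, ∃ u : A, ⁅v₂ - c • v₁, u⁆ ≠ 0) ∧ (∀ c : k, ∃ u : A, ⁅w₂ - c • w₁, u⁆ ≠ 0) ∧
    ⁅v₁, w₁⁆ ≠ 0

variable {k}
variable {A A' : Type u} [LieRing A] [LieAlgebra k A] [LieRing A'] [LieAlgebra k A']

lemma equiv_lie (e : A ≃ₗ⁅k⁆ A') (x y : A) : ⁅e x, e y⁆ = e ⁅x, y⁆ :=
  (e.toLieHom.map_lie x y).symm

lemma equiv_zero (e : A ≃ₗ⁅k⁆ A') : e (0 : A) = 0 := e.toLieHom.map_zero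

lemma equiv_smul (e : A ≃ₗ⁅k⁆ A') (c : k) (x : A) : e (c • x) = c • e x :=
  e.toLieHom.map_smul c x

lemma equiv_add (e : A ≃ₗ⁅k⁆ A') (x y : A) : e (x + y) = e x + e y :=
  e.toLieHom.map_add x y

lemma equiv_sub (e : A ≃ₗ⁅k⁆ A') (x y : A) : e (x - y) = e x - e y := by
  have := e.toLinearEquiv.map_sub x y
  exact this

lemma equiv_ne_zero (e : A ≃ₗ⁅k⁆ A') {x : A} (h : x ≠ 0) : e x ≠ 0 := by
  intro h0
  exact h (by simpa [equiv_zero] using e.injective (h0.trans (equiv_zero e).symm))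

lemma P1_transfer (e : A ≃ₗ⁅k⁆ A') (h : P1 k A) : P1 k A' := by
  obtain ⟨v, ⟨w0, hw0⟩, h⟩ := h
  refine ⟨e v, ⟨e w0, by rw [equiv_lie]; exact equiv_ne_zero e hw0⟩, ?_⟩
  intro w w'
  obtain ⟨a, b, hab, heq⟩ := h (e.symm w) (e.symm w')
  refine ⟨a, b, hab, ?_⟩
  have hw : w = e (e.symm w) := (e.apply_symm_apply w).symm
  have hw' : w' = e (e.symm w') := (e.apply_symm_apply w').symm
  rw [hw, hw', equiv_lie, equiv_lie, ← equiv_smul, ← equiv_smul, ← equiv_add, heq, equiv_zero]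

lemma P2_transfer (e : A ≃ₗ⁅k⁆ A') (h : P2 k A) : P2 k A' := by
  obtain ⟨v₁, v₂, w₁, w₂, h1, h2, h3, h4, h5⟩ := h
  refine ⟨e v₁, e v₂, e w₁, e w₂, ?_, ?_, ?_, ?_, ?_⟩
  · rw [equiv_lie, h1, equiv_zero]
  · rw [equiv_lie, h2, equiv_zero]
  · intro c
    obtain ⟨u, hu⟩ := h3 c
    refine ⟨e u, ?_⟩
    rw [show e v₂ - c • e v₁ = e (v₂ - c • v₁) by rw [equiv_sub, equiv_smul], equiv_lie]
    exact equiv_ne_zero e hu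
  · intro c
    obtain ⟨u, hu⟩ := h4 c
    refine ⟨e u, ?_⟩
    rw [show e w₂ - c • e w₁ = e (w₂ - c • w₁) by rw [equiv_sub, equiv_smul], equiv_lie]
    exact equiv_ne_zero e hu
  · rw [equiv_lie]; exact equiv_ne_zero e h5

end Invariants

section ModelProofs

-- a generic helper: an element of Mdl with zero first component brackets to zero
lemma lie_eq_zero_of_pa_left {B : (Fin 4 → k) → (Fin 4 → k) → (Fin 4 → k)} [IsGoodB k B]
    {v : Mdl k B} (h : Mdl.pa v = 0) (w : Mdl k B) : ⁅v, w⁆ = 0 := by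
  rw [Mdl.lie_def, h, Mdl.zero_left (B := B) (Mdl.pa w)]; rfl

lemma lie_eq_zero_of_pa_right {B : (Fin 4 → k) → (Fin 4 → k) → (Fin 4 → k)} [IsGoodB k B]
    {w : Mdl k B} (h : Mdl.pa w = 0) (v : Mdl k B) : ⁅v, w⁆ = 0 := by
  rw [Mdl.lie_def, h, Mdl.zero_right (B := B) (Mdl.pa v)]; rfl

lemma p1B2 : P1 k (Mdl k (B2 k)) := by
  refine ⟨Mdl.mk (Pi.single 0 1) 0, ⟨Mdl.mk (Pi.single 3 1) 0, ?_⟩, ?_⟩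
  · rw [Mdl.lie_def, Mdl.pa_mk, Mdl.pa_mk, M2.Bs03]
    intro hz
    have h0 := congrArg (fun z => Mdl.pb z 0) hz
    simp [Pi.single_apply] at h0
  · intro w w'
    by_cases hm : Mdl.pa w 3 = 0
    · refine ⟨1, 0, Or.inl one_ne_zero, ?_⟩
      rw [one_smul, zero_smul, add_zero, Mdl.lie_def, Mdl.pa_mk]
      refine Mdl.ext (by simp) ?_
      simp only [Mdl.pb_mk, Mdl.pb_zero]
      funext i; fin_cases i <;> simp [Pi.single_apply, hm]
    · refine ⟨Mdl.pa w' 3, -Mdl.pa w 3, Or.inr (neg_ne_zero.mpr hm), ?_⟩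
      rw [Mdl.lie_def, Mdl.lie_def, Mdl.pa_mk]
      refine Mdl.ext (by simp) ?_
      simp only [Mdl.pb_add, Mdl.pb_smul, Mdl.pb_mk, Mdl.pb_zero]
      funext i; fin_cases i <;> simp [Pi.single_apply] <;> ring

end ModelProofs

namespace Mdl
variable {B : (Fin 4 → k) → (Fin 4 → k) → (Fin 4 → k)}
@[simp] lemma pa_sub (m n : Mdl k B) : pa (m - n) = pa m - pa n := rfl
@[simp] lemma pb_sub (m n : Mdl k B) : pb (m - n) = pb m - pb n := rfl
end Mdl

section ModelProofs2
-- column lemmas for B1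
lemma col10 (p : Fin 4 → k) : B1 k p (Pi.single 0 1) = ![-p 2, -p 3, 0, 0] := by
  funext i; fin_cases i <;> simp [Pi.single_apply]
lemma col11 (p : Fin 4 → k) : B1 k p (Pi.single 1 1) = ![0, -p 2, -p 3, 0] := by
  funext i; fin_cases i <;> simp [Pi.single_apply]
lemma col12 (p : Fin 4 → k) : B1 k p (Pi.single 2 1) = ![p 0, p 1, 0, -p 3] := by
  funext i; fin_cases i <;> simp [Pi.single_apply]
lemma col13 (p : Fin 4 → k) : B1 k p (Pi.single 3 1) = ![0, p 0, p 1, p 2] := by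
  funext i; fin_cases i <;> simp [Pi.single_apply]
-- column lemmas for B3
lemma col30 (p : Fin 4 → k) : B3 k p (Pi.single 0 1) = ![-p 2, -p 3, 0, 0] := by
  funext i; fin_cases i <;> simp [Pi.single_apply]
lemma col31 (p : Fin 4 → k) : B3 k p (Pi.single 1 1) = ![0, 0, -p 2, -p 3] := by
  funext i; fin_cases i <;> simp [Pi.single_apply]
lemma col32 (p : Fin 4 → k) : B3 k p (Pi.single 2 1) = ![p 0, 0, p 1, 0] := by
  funext i; fin_cases i <;> simp [Pi.single_apply]
lemma col33 (p : Fin 4 → k) : B3 k p (Pi.single 3 1) = ![0, p 0, 0, p 1] := by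
  funext i; fin_cases i <;> simp [Pi.single_apply]

lemma notP1B1 : ¬ P1 k (Mdl k (B1 k)) := by
  rintro ⟨v, ⟨w0, hw0⟩, h⟩
  set p := Mdl.pa v with hpv
  have hp : p ≠ 0 := fun h0 => hw0 (lie_eq_zero_of_pa_left k h0 w0)
  have hco : ∀ (u u' : Fin 4 → k) (i : Fin 4) (a b : k),
      a • ⁅v, Mdl.mk (B := B1 k) u 0⁆ + b • ⁅v, Mdl.mk u' 0⁆ = 0 →
      a * B1 k p u i + b * B1 k p u' i = 0 := by
    intro u u' i a b hh
    have := congrArg (fun z => Mdl.pb z i) hh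
    simpa [Mdl.lie_def] using this
  by_cases h3 : p 3 = 0
  · by_cases hc2 : p 2 = 0
    · by_cases hc1 : p 1 = 0
      · -- p 0 ≠ 0
        have h0 : p 0 ≠ 0 := by
          intro h0; apply hp; funext i; fin_cases i <;> assumption
        obtain ⟨a, b, hab, heq⟩ := h (Mdl.mk (Pi.single 2 1) 0) (Mdl.mk (Pi.single 3 1) 0)
        have e0 := hco _ _ 0 a b heq
        have e1 := hco _ _ 1 a b heq
        rw [col12 k p, col13 k p] at e0 e1
        have e0' : a * p 0 + b * 0 = 0 := e0
        have e1' : a * p 1 + b * p 0 = 0 := e1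
        have ha : a = 0 := (mul_eq_zero.mp (by linear_combination e0')).resolve_right h0
        have hb : b = 0 :=
          (mul_eq_zero.mp (show b * p 0 = 0 by linear_combination e1' - p 1 * ha)).resolve_right h0
        rcases hab with hx | hx
        exacts [hx ha, hx hb]
      · obtain ⟨a, b, hab, heq⟩ := h (Mdl.mk (Pi.single 2 1) 0) (Mdl.mk (Pi.single 3 1) 0)
        have e1 := hco _ _ 1 a b heq
        have e2 := hco _ _ 2 a b heq
        rw [col12 k p, col13 k p] at e1 e2
        have e1' : a * p 1 + b * p 0 = 0 := e1
        have e2' : a * 0 + b * p 1 = 0 := e2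
        have hb : b = 0 := (mul_eq_zero.mp (by linear_combination e2')).resolve_right hc1
        have ha : a = 0 :=
          (mul_eq_zero.mp (show a * p 1 = 0 by linear_combination e1' - p 0 * hb)).resolve_right hc1
        rcases hab with hx | hx
        exacts [hx ha, hx hb]
    · obtain ⟨a, b, hab, heq⟩ := h (Mdl.mk (Pi.single 0 1) 0) (Mdl.mk (Pi.single 3 1) 0)
      have e0 := hco _ _ 0 a b heq
      have e3 := hco _ _ 3 a b heq
      rw [col10 k p, col13 k p] at e0 e3
      have e0' : a * (-p 2) + b * 0 = 0 := e0
      have e3' : a * 0 + b * p 2 = 0 := e3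
      have ha : a = 0 := (mul_eq_zero.mp (show a * p 2 = 0 by linear_combination -e0')).resolve_right hc2
      have hb : b = 0 := (mul_eq_zero.mp (by linear_combination e3')).resolve_right hc2
      rcases hab with hx | hx
      exacts [hx ha, hx hb]
  · obtain ⟨a, b, hab, heq⟩ := h (Mdl.mk (Pi.single 0 1) 0) (Mdl.mk (Pi.single 1 1) 0)
    have e1 := hco _ _ 1 a b heq
    have e2 := hco _ _ 2 a b heq
    rw [col10 k p, col11 k p] at e1 e2
    have e1' : a * (-p 3) + b * (-p 2) = 0 := e1
    have e2' : a * 0 + b * (-p 3) = 0 := e2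
    have hb : b = 0 := (mul_eq_zero.mp (show b * p 3 = 0 by linear_combination -e2')).resolve_right h3
    have ha : a = 0 :=
      (mul_eq_zero.mp (show a * p 3 = 0 by linear_combination -e1' - p 2 * hb)).resolve_right h3
    rcases hab with hx | hx
    exacts [hx ha, hx hb]

lemma notP1B3 : ¬ P1 k (Mdl k (B3 k)) := by
  rintro ⟨v, ⟨w0, hw0⟩, h⟩
  set p := Mdl.pa v with hpv
  have hp : p ≠ 0 := fun h0 => hw0 (lie_eq_zero_of_pa_left k h0 w0)
  have hco : ∀ (u u' : Fin 4 → k) (i : Fin 4) (a b : k),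
      a • ⁅v, Mdl.mk (B := B3 k) u 0⁆ + b • ⁅v, Mdl.mk u' 0⁆ = 0 →
      a * B3 k p u i + b * B3 k p u' i = 0 := by
    intro u u' i a b hh
    have := congrArg (fun z => Mdl.pb z i) hh
    simpa [Mdl.lie_def] using this
  by_cases hc2 : p 2 = 0
  · by_cases h3 : p 3 = 0
    · by_cases h0 : p 0 = 0
      · have h1 : p 1 ≠ 0 := by
          intro h1; apply hp; funext i; fin_cases i <;> assumption
        obtain ⟨a, b, hab, heq⟩ := h (Mdl.mk (Pi.single 2 1) 0) (Mdl.mk (Pi.single 3 1) 0)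
        have e2 := hco _ _ 2 a b heq
        have e3 := hco _ _ 3 a b heq
        rw [col32 k p, col33 k p] at e2 e3
        have e2' : a * p 1 + b * 0 = 0 := e2
        have e3' : a * 0 + b * p 1 = 0 := e3
        have ha : a = 0 := (mul_eq_zero.mp (by linear_combination e2')).resolve_right h1
        have hb : b = 0 := (mul_eq_zero.mp (by linear_combination e3')).resolve_right h1
        rcases hab with hx | hx
        exacts [hx ha, hx hb]
      · obtain ⟨a, b, hab, heq⟩ := h (Mdl.mk (Pi.single 2 1) 0) (Mdl.mk (Pi.single 3 1) 0)
        have e0 := hco _ _ 0 a b heq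
        have e1 := hco _ _ 1 a b heq
        rw [col32 k p, col33 k p] at e0 e1
        have e0' : a * p 0 + b * 0 = 0 := e0
        have e1' : a * 0 + b * p 0 = 0 := e1
        have ha : a = 0 := (mul_eq_zero.mp (by linear_combination e0')).resolve_right h0
        have hb : b = 0 := (mul_eq_zero.mp (by linear_combination e1')).resolve_right h0
        rcases hab with hx | hx
        exacts [hx ha, hx hb]
    · obtain ⟨a, b, hab, heq⟩ := h (Mdl.mk (Pi.single 0 1) 0) (Mdl.mk (Pi.single 1 1) 0)
      have e1 := hco _ _ 1 a b heq
      have e3 := hco _ _ 3 a b heq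
      rw [col30 k p, col31 k p] at e1 e3
      have e1' : a * (-p 3) + b * 0 = 0 := e1
      have e3' : a * 0 + b * (-p 3) = 0 := e3
      have ha : a = 0 := (mul_eq_zero.mp (show a * p 3 = 0 by linear_combination -e1')).resolve_right h3
      have hb : b = 0 := (mul_eq_zero.mp (show b * p 3 = 0 by linear_combination -e3')).resolve_right h3
      rcases hab with hx | hx
      exacts [hx ha, hx hb]
  · obtain ⟨a, b, hab, heq⟩ := h (Mdl.mk (Pi.single 0 1) 0) (Mdl.mk (Pi.single 1 1) 0)
    have e0 := hco _ _ 0 a b heq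
    have e2 := hco _ _ 2 a b heq
    rw [col30 k p, col31 k p] at e0 e2
    have e0' : a * (-p 2) + b * 0 = 0 := e0
    have e2' : a * 0 + b * (-p 2) = 0 := e2
    have ha : a = 0 := (mul_eq_zero.mp (show a * p 2 = 0 by linear_combination -e0')).resolve_right hc2
    have hb : b = 0 := (mul_eq_zero.mp (show b * p 2 = 0 by linear_combination -e2')).resolve_right hc2
    rcases hab with hx | hx
    exacts [hx ha, hx hb]

lemma keyB1 (p r : Fin 4 → k) (hB : B1 k p r = 0) (hp : p ≠ 0) (hind : ∀ c : k, r ≠ c • p) :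
    p 2 = 0 ∧ p 3 = 0 := by
  have e0 : p 0 * r 2 - p 2 * r 0 = 0 := by simpa using congrFun hB 0
  have e1 : (p 0 * r 3 - p 3 * r 0) + (p 1 * r 2 - p 2 * r 1) = 0 := by simpa using congrFun hB 1
  have e2 : p 1 * r 3 - p 3 * r 1 = 0 := by simpa using congrFun hB 2
  have e3 : p 2 * r 3 - p 3 * r 2 = 0 := by simpa using congrFun hB 3
  have hsq : (p 1 * r 2 - p 2 * r 1) ^ 2 = 0 := by
    linear_combination (p 1 * r 2 - p 2 * r 1) * e1 + (p 0 * r 1 - p 1 * r 0) * e3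
      - (p 1 * r 3 - p 3 * r 1) * e0
  have h12 : p 1 * r 2 - p 2 * r 1 = 0 := by
    exact sq_eq_zero_iff.mp (by rw [sq]; rw [← sq]; exact hsq)
  have h03 : p 0 * r 3 - p 3 * r 0 = 0 := by linear_combination e1 - h12
  constructor
  · by_contra ha2
    apply hind (r 2 / p 2)
    funext i
    have hsm : ((r 2 / p 2) • p) i = r 2 / p 2 * p i := rfl
    rw [hsm]
    fin_cases i
    · show r 0 = r 2 / p 2 * p 0
      field_simp; linear_combination -e0
    · show r 1 = r 2 / p 2 * p 1
      field_simp; linear_combination -h12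
    · show r 2 = r 2 / p 2 * p 2
      field_simp
    · show r 3 = r 2 / p 2 * p 3
      field_simp; linear_combination e3
  · by_contra ha3
    apply hind (r 3 / p 3)
    funext i
    have hsm : ((r 3 / p 3) • p) i = r 3 / p 3 * p i := rfl
    rw [hsm]
    fin_cases i
    · show r 0 = r 3 / p 3 * p 0
      field_simp; linear_combination -h03
    · show r 1 = r 3 / p 3 * p 1
      field_simp; linear_combination -e2
    · show r 2 = r 3 / p 3 * p 2
      field_simp; linear_combination -e3
    · show r 3 = r 3 / p 3 * p 3
      field_simp

lemma notP2B1 : ¬ P2 k (Mdl k (B1 k)) := by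
  rintro ⟨v₁, v₂, w₁, w₂, h1, h2, h3, h4, h5⟩
  set p := Mdl.pa v₁ with hp1
  set r := Mdl.pa v₂ with hr1
  set q := Mdl.pa w₁ with hq1
  set s := Mdl.pa w₂ with hs1
  have hp : p ≠ 0 := fun h0 => h5 (lie_eq_zero_of_pa_left k h0 w₁)
  have hq : q ≠ 0 := fun h0 => h5 (lie_eq_zero_of_pa_right k h0 v₁)
  have hBpr : B1 k p r = 0 := by
    have := congrArg Mdl.pb h1; simpa [Mdl.lie_def] using this
  have hBqs : B1 k q s = 0 := by
    have := congrArg Mdl.pb h2; simpa [Mdl.lie_def] using this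
  have hindv : ∀ c : k, r ≠ c • p := by
    intro c hc
    obtain ⟨u, hu⟩ := h3 c
    apply hu
    apply lie_eq_zero_of_pa_left
    rw [Mdl.pa_sub, Mdl.pa_smul, ← hr1, ← hp1, hc, sub_self]
  have hindw : ∀ c : k, s ≠ c • q := by
    intro c hc
    obtain ⟨u, hu⟩ := h4 c
    apply hu
    apply lie_eq_zero_of_pa_left
    rw [Mdl.pa_sub, Mdl.pa_smul, ← hs1, ← hq1, hc, sub_self]
  obtain ⟨hp2, hp3⟩ := keyB1 k p r hBpr hp hindv
  obtain ⟨hq2, hq3⟩ := keyB1 k q s hBqs hq hindw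
  apply h5
  rw [Mdl.lie_def]
  refine Mdl.ext (by simp) ?_
  show B1 k p q = Mdl.pb 0
  funext i; fin_cases i <;> simp [hp2, hp3, hq2, hq3]

lemma p2B3 : P2 k (Mdl k (B3 k)) := by
  refine ⟨Mdl.mk (Pi.single 0 1) 0, Mdl.mk (Pi.single 1 1) 0,
    Mdl.mk (Pi.single 2 1) 0, Mdl.mk (Pi.single 3 1) 0, ?_, ?_, ?_, ?_, ?_⟩
  · rw [Mdl.lie_def]
    refine Mdl.ext (by simp) ?_
    show B3 k (Pi.single 0 1) (Pi.single 1 1) = Mdl.pb 0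
    funext i; fin_cases i <;> simp [Pi.single_apply]
  · rw [Mdl.lie_def]
    refine Mdl.ext (by simp) ?_
    show B3 k (Pi.single 2 1) (Pi.single 3 1) = Mdl.pb 0
    funext i; fin_cases i <;> simp [Pi.single_apply]
  · intro c
    refine ⟨Mdl.mk (Pi.single 2 1) 0, ?_⟩
    intro h0
    have := congrArg (fun z => Mdl.pb z 2) h0
    simp only [Mdl.lie_def, Mdl.pb_mk, Mdl.pa_sub, Mdl.pa_smul, Mdl.pa_mk] at this
    rw [show B3 k ((Pi.single 1 1 : Fin 4 → k) - c • (Pi.single 0 1 : Fin 4 → k)) (Pi.single 2 1) 2 = 1 by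
      simp [Pi.single_apply]] at this
    simpa using this
  · intro c
    refine ⟨Mdl.mk (Pi.single 0 1) 0, ?_⟩
    intro h0
    have := congrArg (fun z => Mdl.pb z 1) h0
    simp only [Mdl.lie_def, Mdl.pb_mk, Mdl.pa_sub, Mdl.pa_smul, Mdl.pa_mk] at this
    rw [show B3 k ((Pi.single 3 1 : Fin 4 → k) - c • (Pi.single 2 1 : Fin 4 → k)) (Pi.single 0 1) 1 = -1 by
      simp [Pi.single_apply]] at this
    simpa using this
  · intro h0
    have := congrArg (fun z => Mdl.pb z 0) h0
    simp only [Mdl.lie_def, Mdl.pb_mk, Mdl.pa_mk] at this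
    rw [show B3 k (Pi.single 0 1) (Pi.single 2 1) 0 = 1 by simp [Pi.single_apply]] at this
    simpa using this

end ModelProofs2


/-- Over a field of characteristic `≠ 2`, the class-2 nilpotent quotients
`E = S/[S,S,S]`, `Ẽ = S̃/[S̃,S̃,S̃]`, `Ê = Ŝ/[Ŝ,Ŝ,Ŝ]` of the three two-relator Lie
algebras above are pairwise non-isomorphic (hence so are `S`, `S̃`, `Ŝ`). -/
theorem classTwoQuots_pairwise_nonisomorphic (h2 : (2 : k) ≠ 0) :
    (¬ Nonempty (classTwoQuot k (S k) ≃ₗ⁅k⁆ classTwoQuot k (St k))) ∧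
    (¬ Nonempty (classTwoQuot k (S k) ≃ₗ⁅k⁆ classTwoQuot k (Sh k))) ∧
    (¬ Nonempty (classTwoQuot k (St k) ≃ₗ⁅k⁆ classTwoQuot k (Sh k))) := by
  have e1 : classTwoQuot k (S k) ≃ₗ⁅k⁆ Mdl k (B1 k) := M1.E1 k
  have e2 : classTwoQuot k (St k) ≃ₗ⁅k⁆ Mdl k (B2 k) := M2.E2 k
  have e3 : classTwoQuot k (Sh k) ≃ₗ⁅k⁆ Mdl k (B3 k) := M3.E3 k
  refine ⟨?_, ?_, ?_⟩
  · rintro ⟨e⟩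
    exact notP1B1 k (P1_transfer ((e1.symm.trans (e.trans e2)).symm) (p1B2 k))
  · rintro ⟨e⟩
    exact notP2B1 k (P2_transfer ((e1.symm.trans (e.trans e3)).symm) (p2B3 k))
  · rintro ⟨e⟩
    exact notP1B3 k (P1_transfer (e2.symm.trans (e.trans e3)) (p1B2 k))
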